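/- With X = Y = [0,1], R the normalized measure on the diagonal (R(E) = λ({t : (t,t) ∈ E})) and S_y = δ_y, the measure R is not absolutely continuous with respect to λ⊗λ; in particular R([0,1/2]×[1/2,1]) = 0 while δ_{1/2}([0,1/2]) = 1, so no rectangle formula of the form π(A×B) = ⋃_{y∈ρ(B)} σ_y(A)×{y} can hold for any lifting ρ of λ and liftings σ_y of δ_y. -/

import Mathlib

open MeasureTheory Set

/-- A lifting on the (complete) probability space given by `Q`. -/
def IsLifting {Y : Type*} [MeasurableSpace Y] (Q : Measure Y) (ρ : Set Y → Set Y) : Prop :=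
  (∀ B, MeasurableSet B → MeasurableSet (ρ B) ∧ Q (symmDiff B (ρ B)) = 0) ∧
  (∀ B B', MeasurableSet B → MeasurableSet B' → Q (symmDiff B B') = 0 → ρ B = ρ B') ∧
  ρ ∅ = ∅ ∧ ρ Set.univ = Set.univ ∧
  (∀ B B', MeasurableSet B → MeasurableSet B' → ρ (B ∩ B') = ρ B ∩ ρ B') ∧
  (∀ B, MeasurableSet B → ρ Bᶜ = (ρ B)ᶜ)

/-- A lifting on the completion of the probability space given by `μ`
(acting on all `μ`-null-measurable sets). -/
def IsLiftingNM {α : Type*} [MeasurableSpace α] (μ : Measure α) (τ : Set α → Set α) : Prop :=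
  (∀ E, NullMeasurableSet E μ → NullMeasurableSet (τ E) μ ∧ μ (symmDiff E (τ E)) = 0) ∧
  (∀ E F, NullMeasurableSet E μ → NullMeasurableSet F μ → μ (symmDiff E F) = 0 → τ E = τ F) ∧
  τ ∅ = ∅ ∧ τ Set.univ = Set.univ ∧
  (∀ E F, NullMeasurableSet E μ → NullMeasurableSet F μ → τ (E ∩ F) = τ E ∩ τ F) ∧
  (∀ E, NullMeasurableSet E μ → τ Eᶜ = (τ E)ᶜ)

lemma lam_null {s : Set ℝ} (hs : volume s = 0) :
    (volume.restrict (Set.Icc 0 1 : Set ℝ)) s = 0 :=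
  le_antisymm (le_trans (Measure.restrict_le_self s) (le_of_eq hs)) zero_le

theorem stmt11 :
    let lam : Measure ℝ := volume.restrict (Set.Icc 0 1)
    let R : Measure (ℝ × ℝ) := lam.map (fun t => (t, t))
    ¬ R ≪ lam.prod lam ∧
    R (Set.Icc 0 (1/2) ×ˢ Set.Icc (1/2) 1) = 0 ∧
    Measure.dirac (1/2 : ℝ) (Set.Icc 0 (1/2)) = 1 ∧
    ∀ (ρ : Set ℝ → Set ℝ) (π : Set (ℝ × ℝ) → Set (ℝ × ℝ)) (σ : ℝ → Set ℝ → Set ℝ),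
      IsLifting lam ρ → IsLiftingNM R π → (∀ y, IsLiftingNM (Measure.dirac y) (σ y)) →
      ¬ (∀ (A B : Set ℝ), MeasurableSet A → MeasurableSet B →
          π (A ×ˢ B) = {p : ℝ × ℝ | p.2 ∈ ρ B ∧ p.1 ∈ σ p.2 A}) := by
  intro lam R
  have hmeas : Measurable (fun t : ℝ => (t, t)) := measurable_id.prodMk measurable_id
  have hDmeas : MeasurableSet {p : ℝ × ℝ | p.1 = p.2} :=
    measurableSet_eq_fun measurable_fst measurable_snd
  refine ⟨?_, ?_, ?_, ?_⟩
  · intro habs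
    have hprod : (lam.prod lam) {p : ℝ × ℝ | p.1 = p.2} = 0 := by
      rw [Measure.prod_apply hDmeas]
      have : ∀ x : ℝ, lam (Prod.mk x ⁻¹' {p : ℝ × ℝ | p.1 = p.2}) = 0 := by
        intro x
        have : (Prod.mk x ⁻¹' {p : ℝ × ℝ | p.1 = p.2}) = {x} := by
          ext y; simp [eq_comm]
        rw [this]
        exact lam_null Real.volume_singleton
      simp [this]
    have hR := habs hprod
    have : R {p : ℝ × ℝ | p.1 = p.2} = 1 := by
      rw [Measure.map_apply hmeas hDmeas]
      have : ((fun t : ℝ => (t, t)) ⁻¹' {p : ℝ × ℝ | p.1 = p.2}) = Set.univ := by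
        ext t; simp
      rw [this]
      simp [lam, Real.volume_Icc]
    rw [hR] at this
    exact zero_ne_one this
  · rw [Measure.map_apply hmeas (measurableSet_Icc.prod measurableSet_Icc)]
    have : ((fun t : ℝ => (t, t)) ⁻¹' (Set.Icc 0 (1/2) ×ˢ Set.Icc (1/2) 1)) = {(1/2 : ℝ)} := by
      ext t
      simp only [Set.mem_preimage, Set.mem_prod, Set.mem_Icc, Set.mem_singleton_iff]
      constructor
      · rintro ⟨⟨_, h1⟩, h2, _⟩; linarith
      · rintro rfl; norm_num
    rw [this]
    exact lam_null Real.volume_singleton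
  · rw [Measure.dirac_apply]
    simp [Set.indicator_of_mem, Set.mem_Icc]
  · intro ρ π σ hρ hπ hσ h
    -- Use the rectangle A = {0}, B = univ
    have hA : MeasurableSet ({(0:ℝ)}) := measurableSet_singleton 0
    have hAB := h {(0:ℝ)} Set.univ hA MeasurableSet.univ
    -- π ({0} ×ˢ univ) = ∅
    have hR0 : R ({(0:ℝ)} ×ˢ (Set.univ : Set ℝ)) = 0 := by
      rw [Measure.map_apply hmeas (hA.prod MeasurableSet.univ)]
      have : ((fun t : ℝ => (t, t)) ⁻¹' ({(0:ℝ)} ×ˢ (Set.univ : Set ℝ))) = {(0:ℝ)} := by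
        ext t; simp [eq_comm]
      rw [this]
      exact lam_null Real.volume_singleton
    have hπ0 : π ({(0:ℝ)} ×ˢ (Set.univ : Set ℝ)) = ∅ := by
      have := hπ.2.1 ({(0:ℝ)} ×ˢ (Set.univ : Set ℝ)) ∅
        ((hA.prod MeasurableSet.univ).nullMeasurableSet) (MeasurableSet.empty.nullMeasurableSet)
        (by simpa [Set.symmDiff_def] using hR0)
      rw [this, hπ.2.2.1]
    -- σ 0 {0} = univ
    have hσ0 : σ 0 ({(0:ℝ)}) = Set.univ := by
      have hd : Measure.dirac (0:ℝ) (symmDiff ({(0:ℝ)}) Set.univ) = 0 := by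
        have : symmDiff ({(0:ℝ)}) (Set.univ : Set ℝ) = ({(0:ℝ)})ᶜ := by
          simp [Set.symmDiff_def, Set.compl_eq_univ_diff]
        rw [this, Measure.dirac_apply]
        simp
      have := (hσ 0).2.1 ({(0:ℝ)}) Set.univ hA.nullMeasurableSet
        MeasurableSet.univ.nullMeasurableSet hd
      rw [this, (hσ 0).2.2.2.1]
    -- contradiction at the point (0,0)
    have hmem : ((0:ℝ), (0:ℝ)) ∈ {p : ℝ × ℝ | p.2 ∈ ρ Set.univ ∧ p.1 ∈ σ p.2 {(0:ℝ)}} := by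
      constructor
      · rw [hρ.2.2.2.1]; trivial
      · rw [hσ0]; trivial
    rw [← hAB, hπ0] at hmem
    exact hmem
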